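/- Under Assumptions 1 and 2 (common minimizer and Hölder condition of order p with moduli ≤ L_max), if {x_k} is generated by the incremental subgradient method with constant stepsize v_k ≡ v > 0, then liminf_{k→∞} f(x_k) ≤ f* + (m² v / (2 C_{p,m}))^p, where C_{p,m} = L_max^{-1/p} min{1, (2m)^{1-1/p}}. -/

import Mathlib

open Finset Real

lemma rpow_add_le_add_rpow' {x y q : ℝ} (hx : 0 ≤ x) (hy : 0 ≤ y) (h0 : 0 ≤ q) (h1 : q ≤ 1) :
    (x + y) ^ q ≤ x ^ q + y ^ q := by
  lift x to NNReal using hx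
  lift y to NNReal using hy
  rw [← NNReal.coe_add, ← NNReal.coe_rpow, ← NNReal.coe_rpow, ← NNReal.coe_rpow,
    ← NNReal.coe_add, NNReal.coe_le_coe]
  exact NNReal.rpow_add_le_add_rpow x y h0 h1

lemma add_rpow_le_rpow_add' {x y q : ℝ} (hx : 0 ≤ x) (hy : 0 ≤ y) (h1 : 1 ≤ q) :
    x ^ q + y ^ q ≤ (x + y) ^ q := by
  lift x to NNReal using hx
  lift y to NNReal using hy
  rw [← NNReal.coe_add, ← NNReal.coe_rpow, ← NNReal.coe_rpow, ← NNReal.coe_rpow,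
    ← NNReal.coe_add, NNReal.coe_le_coe]
  exact NNReal.add_rpow_le_rpow_add x y h1

/-- subadditivity of rpow over finite sums, `q ≤ 1`. -/
lemma rpow_sum_le_sum_rpow' {ι : Type*} (s : Finset ι) (f : ι → ℝ) (hf : ∀ i ∈ s, 0 ≤ f i)
    {q : ℝ} (hq0 : 0 < q) (hq1 : q ≤ 1) :
    (∑ i ∈ s, f i) ^ q ≤ ∑ i ∈ s, f i ^ q := by
  classical
  induction s using Finset.cons_induction with
  | empty => simp [Real.zero_rpow hq0.ne']
  | cons a s ha ih =>
      rw [Finset.sum_cons, Finset.sum_cons]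
      have h1 : (f a + ∑ i ∈ s, f i) ^ q ≤ f a ^ q + (∑ i ∈ s, f i) ^ q :=
        rpow_add_le_add_rpow' (hf a (Finset.mem_cons_self a s))
          (Finset.sum_nonneg fun i hi => hf i (Finset.mem_cons_of_mem hi)) hq0.le hq1
      exact h1.trans (by
        gcongr
        exact ih fun i hi => hf i (Finset.mem_cons_of_mem hi))

/-- superadditivity of rpow over finite sums, `1 ≤ p`. -/
lemma sum_rpow_le_rpow_sum' {ι : Type*} (s : Finset ι) (f : ι → ℝ) (hf : ∀ i ∈ s, 0 ≤ f i)
    {p : ℝ} (hp : 1 ≤ p) :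
    ∑ i ∈ s, f i ^ p ≤ (∑ i ∈ s, f i) ^ p := by
  classical
  induction s using Finset.cons_induction with
  | empty => simp [Real.rpow_nonneg]
  | cons a s ha ih =>
      rw [Finset.sum_cons, Finset.sum_cons]
      have h2 : f a ^ p + (∑ i ∈ s, f i) ^ p ≤ (f a + ∑ i ∈ s, f i) ^ p :=
        add_rpow_le_rpow_add' (hf a (Finset.mem_cons_self a s))
          (Finset.sum_nonneg fun i hi => hf i (Finset.mem_cons_of_mem hi)) hp
      refine le_trans ?_ h2
      gcongr
      exact ih fun i hi => hf i (Finset.mem_cons_of_mem hi)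

/-- power-mean inequality: `(∑ f)^q ≤ card^(q-1) * ∑ f^q` for `1 ≤ q`. -/
lemma rpow_sum_le_card_mul_sum_rpow {ι : Type*} (s : Finset ι) (f : ι → ℝ)
    (hf : ∀ i ∈ s, 0 ≤ f i) {q : ℝ} (hq : 1 ≤ q) :
    (∑ i ∈ s, f i) ^ q ≤ (s.card : ℝ) ^ (q - 1) * ∑ i ∈ s, f i ^ q := by
  rcases s.eq_empty_or_nonempty with rfl | hs
  · simp [Real.zero_rpow (by positivity : q ≠ 0)]
  have hc : (0:ℝ) < s.card := by exact_mod_cast Finset.card_pos.mpr hs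
  have h := Real.rpow_arith_mean_le_arith_mean_rpow s (fun _ => 1 / (s.card:ℝ)) f
    (fun i _ => by positivity) (by
      rw [Finset.sum_const, nsmul_eq_mul]
      field_simp) hf hq
  simp only [← Finset.mul_sum] at h
  rw [Real.mul_rpow (by positivity) (Finset.sum_nonneg hf), one_div,
    Real.inv_rpow hc.le] at h
  have hcq : (0:ℝ) < (s.card:ℝ) ^ q := Real.rpow_pos_of_pos hc q
  have h2 := mul_le_mul_of_nonneg_left h hcq.le
  rw [mul_inv_cancel_left₀ hcq.ne'] at h2
  calc (∑ i ∈ s, f i) ^ q ≤ (s.card:ℝ) ^ q * ((s.card:ℝ)⁻¹ * ∑ i ∈ s, f i ^ q) := h2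
    _ = (s.card : ℝ) ^ (q - 1) * ∑ i ∈ s, f i ^ q := by
        rw [Real.rpow_sub hc, Real.rpow_one]
        field_simp

/-- concave Jensen: `∑ f^p ≤ card^(1-p) * (∑ f)^p` for `0 < p ≤ 1`. -/
lemma sum_rpow_le_card_mul_rpow_sum {ι : Type*} (s : Finset ι) (f : ι → ℝ)
    (hf : ∀ i ∈ s, 0 ≤ f i) {p : ℝ} (hp0 : 0 < p) (hp1 : p ≤ 1) :
    ∑ i ∈ s, f i ^ p ≤ (s.card : ℝ) ^ (1 - p) * (∑ i ∈ s, f i) ^ p := by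
  rcases s.eq_empty_or_nonempty with rfl | hs
  · simp [Real.zero_rpow hp0.ne']
  have hc : (0:ℝ) < s.card := by exact_mod_cast Finset.card_pos.mpr hs
  have hq : 1 ≤ 1 / p := by rw [le_div_iff₀ hp0]; linarith
  have h := Real.arith_mean_le_rpow_mean s (fun _ => 1 / (s.card:ℝ)) (fun i => f i ^ p)
    (fun i _ => by positivity) (by
      rw [Finset.sum_const, nsmul_eq_mul]
      field_simp) (fun i hi => Real.rpow_nonneg (hf i hi) p) hq
  simp only [one_div_one_div] at h
  have hz : ∀ i ∈ s, (1/(s.card:ℝ)) * (f i ^ p) ^ (1/p) = (1/(s.card:ℝ)) * f i := fun i hi => by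
    rw [← Real.rpow_mul (hf i hi), mul_one_div, div_self hp0.ne', Real.rpow_one]
  rw [Finset.sum_congr rfl hz] at h
  simp only [← Finset.mul_sum] at h
  rw [Real.mul_rpow (by positivity) (Finset.sum_nonneg hf), one_div,
    Real.inv_rpow hc.le] at h
  have h2 := mul_le_mul_of_nonneg_left h hc.le
  rw [mul_inv_cancel_left₀ hc.ne'] at h2
  calc ∑ i ∈ s, f i ^ p ≤ (s.card:ℝ) * (((s.card:ℝ) ^ p)⁻¹ * (∑ i ∈ s, f i) ^ p) := h2
    _ = (s.card : ℝ) ^ (1 - p) * (∑ i ∈ s, f i) ^ p := by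
        rw [Real.rpow_sub hc, Real.rpow_one]
        field_simp


lemma proj_norm_le {E : Type*} [NormedAddCommGroup E] [InnerProductSpace ℝ E]
    {X : Set E} (hXconv : Convex ℝ X)
    (proj : E → E) (hproj : ∀ y, proj y ∈ X ∧ ∀ w ∈ X, ‖proj y - y‖ ≤ ‖w - y‖)
    (y : E) {w : E} (hw : w ∈ X) : ‖proj y - w‖ ≤ ‖y - w‖ := by
  haveI : Nonempty X := ⟨⟨proj y, (hproj y).1⟩⟩
  have hinf : ‖y - proj y‖ = ⨅ z : X, ‖y - z‖ := by
    apply le_antisymm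
    · refine le_ciInf fun z => ?_
      have h := (hproj y).2 z z.2
      rwa [norm_sub_rev, norm_sub_rev (z:E) y] at h
    · have hbdd : BddBelow (Set.range fun z : X => ‖y - (z:E)‖) :=
        ⟨0, fun r hr => by obtain ⟨z, rfl⟩ := hr; exact norm_nonneg _⟩
      exact ciInf_le hbdd ⟨proj y, (hproj y).1⟩
  have hvar := (norm_eq_iInf_iff_real_inner_le_zero hXconv (hproj y).1).mp hinf w hw
  -- ⟪y - proj y, w - proj y⟫ ≤ 0
  have hexp : ‖y - w‖ ^ 2 = ‖y - proj y‖ ^ 2 + 2 * (inner ℝ (y - proj y) (proj y - w) : ℝ)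
      + ‖proj y - w‖ ^ 2 := by
    have : y - w = (y - proj y) + (proj y - w) := by abel
    rw [this, @norm_add_sq_real]
  have hin : (0:ℝ) ≤ inner ℝ (y - proj y) (proj y - w) := by
    have : (inner ℝ (y - proj y) (proj y - w) : ℝ) = - inner ℝ (y - proj y) (w - proj y) := by
      rw [← inner_neg_right]
      congr 1
      abel
    rw [this]
    linarith
  have hsq : ‖proj y - w‖ ^ 2 ≤ ‖y - w‖ ^ 2 := by
    nlinarith [sq_nonneg ‖y - proj y‖]
  exact (pow_le_pow_iff_left₀ (norm_nonneg _) (norm_nonneg _) two_ne_zero).mp hsq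

lemma rpow_two_add_le {x y q : ℝ} (hx : 0 ≤ x) (hy : 0 ≤ y) (hq : 1 ≤ q) :
    (x + y) ^ q ≤ (2:ℝ) ^ (q-1) * (x ^ q + y ^ q) := by
  have h := rpow_sum_le_card_mul_sum_rpow (Finset.univ : Finset (Fin 2)) ![x, y]
    (fun i _ => by fin_cases i <;> simpa) hq
  simpa [Fin.sum_univ_two] using h

lemma agg_lemma {m : ℕ} (hm : 0 < m) {p L v : ℝ} (hp : 0 < p) (hL : 0 < L) (hv : 0 < v)
    (a b : ℕ → ℝ) (ha : ∀ j ∈ range m, 0 ≤ a j) (hb : ∀ j ∈ range m, 0 ≤ b j)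
    (hba : ∀ j ∈ range m, b j ≤ a j + L * ((j:ℝ)*v)^p) :
    (L ^ (-(1/p)) * min 1 ((2*(m:ℝ))^(1-1/p))) * (∑ j ∈ range m, b j)^(1/p)
      ≤ (∑ j ∈ range m, (a j)^(1/p)) / L^(1/p) + (m:ℝ)*((m:ℝ)-1)/2 * v := by
  set q := 1/p with hqdef
  have hq : 0 < q := by positivity
  set A := ∑ j ∈ range m, a j with hA
  set B := ∑ j ∈ range m, b j with hB
  set Sq := ∑ j ∈ range m, (a j)^q with hSq
  set D := ∑ j ∈ range m, ((j:ℝ)*v)^p with hD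
  set Y := (m:ℝ)*((m:ℝ)-1)/2 * v with hY
  have hm1 : (1:ℝ) ≤ (m:ℝ) := by exact_mod_cast hm
  have hA0 : 0 ≤ A := Finset.sum_nonneg ha
  have hB0 : 0 ≤ B := Finset.sum_nonneg hb
  have hD0 : 0 ≤ D := Finset.sum_nonneg fun j _ => Real.rpow_nonneg (by positivity) p
  have hSq0 : 0 ≤ Sq := Finset.sum_nonneg fun j hj => Real.rpow_nonneg (ha j hj) q
  have hY0 : 0 ≤ Y := by
    have : (0:ℝ) ≤ (m:ℝ) - 1 := by linarith
    positivity
  have hsumid : ∑ j ∈ range m, (j:ℝ)*v = Y := by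
    rw [← Finset.sum_mul, hY]
    congr 1
    have h := Finset.sum_range_id_mul_two m
    have h2 := congrArg (fun t : ℕ => (t:ℝ)) h
    push_cast [Nat.cast_sub hm] at h2
    push_cast
    linarith
  have hBle : B ≤ A + L * D := by
    rw [hA, hD, Finset.mul_sum, ← Finset.sum_add_distrib]
    exact Finset.sum_le_sum hba
  have hLq : (0:ℝ) < L ^ q := Real.rpow_pos_of_pos hL q
  have hLneg : L ^ (-q) = (L ^ q)⁻¹ := Real.rpow_neg hL.le q
  have hLDq : (L * D) ^ q = L ^ q * D ^ q := Real.mul_rpow hL.le hD0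
  have hpq : p * q = 1 := by rw [hqdef, mul_one_div, div_self hp.ne']
  have hfin : (L^q)⁻¹ * (Sq + L^q * Y) = Sq / L^q + Y := by
    rw [mul_add, inv_mul_cancel_left₀ hLq.ne', inv_mul_eq_div]
  rcases le_total p 1 with hp1 | hp1
  · -- p ≤ 1, q ≥ 1
    have hq1 : 1 ≤ q := by rw [hqdef, le_div_iff₀ hp]; linarith
    have hmin : min 1 ((2*(m:ℝ))^(1-q)) = (2*(m:ℝ))^(1-q) := by
      apply min_eq_right
      apply Real.rpow_le_one_of_one_le_of_nonpos (by linarith) (by linarith)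
    set e2 := (2:ℝ)^(q-1) with he2
    set em := (m:ℝ)^(q-1) with hem
    have he20 : 0 < e2 := Real.rpow_pos_of_pos two_pos _
    have hem0 : 0 < em := Real.rpow_pos_of_pos (by linarith) _
    have h2m : (2*(m:ℝ))^(1-q) = (e2*em)⁻¹ := by
      rw [show (1-q) = -(q-1) by ring, Real.rpow_neg (by positivity),
        Real.mul_rpow (by norm_num) (Nat.cast_nonneg m)]
    have hDle : D ≤ (m:ℝ)^(1-p) * Y^p := by
      have := sum_rpow_le_card_mul_rpow_sum (range m) (fun j => (j:ℝ)*v)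
        (fun j _ => by positivity) hp hp1
      rwa [Finset.card_range, hsumid] at this
    have hDq : D ^ q ≤ em * Y := by
      have h1 : D ^ q ≤ ((m:ℝ)^(1-p) * Y^p) ^ q :=
        Real.rpow_le_rpow hD0 hDle hq.le
      have h2 : ((m:ℝ)^(1-p) * Y^p) ^ q = em * Y := by
        rw [Real.mul_rpow (Real.rpow_nonneg (by linarith) _) (Real.rpow_nonneg hY0 _),
          ← Real.rpow_mul (by linarith : (0:ℝ) ≤ (m:ℝ)),
          ← Real.rpow_mul hY0, hpq, Real.rpow_one,
          show (1-p)*q = q - 1 by rw [hqdef]; field_simp]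
      linarith [h1, h2.le]
    have hAq : A ^ q ≤ em * Sq := by
      have := rpow_sum_le_card_mul_sum_rpow (range m) a ha hq1
      rwa [Finset.card_range] at this
    have hBq : B ^ q ≤ e2 * em * (Sq + L^q * Y) := by
      have h1 : B ^ q ≤ (A + L*D) ^ q := Real.rpow_le_rpow hB0 hBle hq.le
      have h2 : (A + L*D) ^ q ≤ e2 * (A^q + (L*D)^q) :=
        rpow_two_add_le hA0 (by positivity) hq1
      have h3 : (L*D)^q ≤ L^q * (em * Y) := by
        rw [hLDq]; exact mul_le_mul_of_nonneg_left hDq hLq.le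
      have h4 : A^q + (L*D)^q ≤ em * Sq + L^q * (em * Y) := add_le_add hAq h3
      have h5 : e2 * (A^q + (L*D)^q) ≤ e2 * (em * Sq + L^q * (em * Y)) :=
        mul_le_mul_of_nonneg_left h4 he20.le
      have h6 : e2 * (em * Sq + L^q * (em * Y)) = e2 * em * (Sq + L^q * Y) := by ring
      linarith
    calc (L ^ (-q) * min 1 ((2*(m:ℝ))^(1-q))) * B^q
        = (L^q)⁻¹ * (e2*em)⁻¹ * B^q := by rw [hLneg, hmin, h2m]
      _ ≤ (L^q)⁻¹ * (e2*em)⁻¹ * (e2 * em * (Sq + L^q * Y)) := by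
          apply mul_le_mul_of_nonneg_left hBq
          positivity
      _ = (L^q)⁻¹ * (Sq + L^q * Y) := by
          rw [mul_assoc, inv_mul_cancel_left₀ (mul_pos he20 hem0).ne']
      _ = Sq / L^q + Y := hfin
  · -- 1 ≤ p, q ≤ 1
    have hq1 : q ≤ 1 := by rw [hqdef, div_le_one hp]; linarith
    have hmin : min 1 ((2*(m:ℝ))^(1-q)) = 1 := by
      apply min_eq_left
      calc (1:ℝ) = (2*(m:ℝ)) ^ (0:ℝ) := by rw [Real.rpow_zero]
        _ ≤ (2*(m:ℝ)) ^ (1-q) := Real.rpow_le_rpow_of_exponent_le (by linarith) (by linarith)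
    have hDle : D ≤ Y^p := by
      have := sum_rpow_le_rpow_sum' (range m) (fun j => (j:ℝ)*v)
        (fun j _ => by positivity) hp1
      rwa [hsumid] at this
    have hDq : D ^ q ≤ Y := by
      have h1 : D ^ q ≤ (Y^p) ^ q := Real.rpow_le_rpow hD0 hDle hq.le
      rwa [← Real.rpow_mul hY0, hpq, Real.rpow_one] at h1
    have hAq : A ^ q ≤ Sq := rpow_sum_le_sum_rpow' (range m) a ha hq hq1
    have hBq : B ^ q ≤ Sq + L^q * Y := by
      have h1 : B ^ q ≤ (A + L*D) ^ q := Real.rpow_le_rpow hB0 hBle hq.le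
      have h2 : (A + L*D) ^ q ≤ A^q + (L*D)^q :=
        rpow_add_le_add_rpow' hA0 (by positivity) hq.le hq1
      have h3 : (L*D)^q ≤ L^q * Y := by
        rw [hLDq]; exact mul_le_mul_of_nonneg_left hDq hLq.le
      linarith
    calc (L ^ (-q) * min 1 ((2*(m:ℝ))^(1-q))) * B^q
        = (L^q)⁻¹ * B^q := by rw [hLneg, hmin, mul_one]
      _ ≤ (L^q)⁻¹ * (Sq + L^q * Y) := by
          apply mul_le_mul_of_nonneg_left hBq
          positivity
      _ = Sq / L^q + Y := hfin
set_option maxHeartbeats 1000000 in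
/-- Incremental subgradient method with constant stepsize (Theorem 3.2). -/
theorem stmt9 {n m : ℕ} (hm : 0 < m)
    (f : Fin m → EuclideanSpace ℝ (Fin n) → ℝ)
    (X : Set (EuclideanSpace ℝ (Fin n))) (hXne : X.Nonempty)
    (hXc : IsClosed X) (hXconv : Convex ℝ X)
    (hqc : ∀ i, QuasiconvexOn ℝ Set.univ (f i)) (hcont : ∀ i, Continuous (f i))
    (p Lmax : ℝ) (hp : 0 < p) (hL : 0 < Lmax)
    (hHolder : ∀ i, ∀ x ∈ X, ∀ y, |f i y - f i x| ≤ Lmax * ‖y - x‖ ^ p)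
    (xstar : EuclideanSpace ℝ (Fin n)) (hxsX : xstar ∈ X)
    (hmin : ∀ i, ∀ y ∈ X, f i xstar ≤ f i y)
    (proj : EuclideanSpace ℝ (Fin n) → EuclideanSpace ℝ (Fin n))
    (hproj : ∀ y, proj y ∈ X ∧ ∀ w ∈ X, ‖proj y - y‖ ≤ ‖w - y‖)
    -- constant stepsize rule (S1)
    (v : ℝ) (hv : 0 < v)
    (x : ℕ → EuclideanSpace ℝ (Fin n)) (z : ℕ → ℕ → EuclideanSpace ℝ (Fin n))
    (hx0 : x 0 ∈ X)
    (hz0 : ∀ k, z k 0 = x k)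
    (hstep : ∀ k, ∀ i : Fin m,
      (f i (z k i) = f i xstar ∧ z k ((i : ℕ) + 1) = z k i) ∨
      (f i xstar < f i (z k i) ∧ ∃ g : EuclideanSpace ℝ (Fin n), ‖g‖ = 1 ∧
        (∀ y, f i y < f i (z k i) → (inner ℝ g (y - z k i) : ℝ) ≤ 0) ∧
        z k ((i : ℕ) + 1) = proj (z k i - v • g)))
    (hxsucc : ∀ k, x (k + 1) = z k m) :
    Filter.liminf (fun k => ∑ i, f i (x k)) Filter.atTop ≤
      (∑ i, f i xstar) +
        ((m : ℝ) ^ 2 * v /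
          (2 * (Lmax ^ (-(1 / p)) * min 1 ((2 * (m : ℝ)) ^ (1 - 1 / p))))) ^ p := by
  classical
  have hq : 0 < 1/p := by positivity
  set q : ℝ := 1/p with hqdef
  have hm1 : (1:ℝ) ≤ (m:ℝ) := by exact_mod_cast hm
  set C : ℝ := Lmax ^ (-q) * min 1 ((2*(m:ℝ))^(1-q)) with hCdef
  have hC0 : 0 < C := by
    apply mul_pos (Real.rpow_pos_of_pos hL _)
    exact lt_min one_pos (Real.rpow_pos_of_pos (by linarith) _)
  have hpq : p * q = 1 := by rw [hqdef, mul_one_div, div_self hp.ne']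
  -- membership of the inner iterates
  have hzmem : ∀ k, x k ∈ X → ∀ j, j ≤ m → z k j ∈ X := by
    intro k hxk j hj
    induction j with
    | zero => rw [hz0]; exact hxk
    | succ i ih =>
        have hi : i < m := hj
        rcases hstep k ⟨i, hi⟩ with ⟨_, heq⟩ | ⟨_, g, _, _, heq⟩
        · have heq' : z k (i+1) = z k i := heq
          rw [heq']; exact ih (Nat.le_of_lt hi)
        · have heq' : z k (i+1) = proj (z k i - v • g) := heq
          rw [heq']; exact (hproj _).1
  have hxmem : ∀ k, x k ∈ X := by
    intro k
    induction k with
    | zero => exact hx0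
    | succ k ih => rw [hxsucc]; exact hzmem k ih m le_rfl
  -- drift bound
  have hdrift : ∀ k, ∀ j ≤ m, ‖z k j - x k‖ ≤ (j:ℝ) * v := by
    intro k j hj
    induction j with
    | zero => rw [hz0]; simp
    | succ i ih =>
        have hi : i < m := hj
        have ihh := ih (Nat.le_of_lt hi)
        have hstepnorm : ‖z k (i+1) - z k i‖ ≤ v := by
          rcases hstep k ⟨i, hi⟩ with ⟨_, heq⟩ | ⟨_, g, hg1, _, heq⟩
          · have heq' : z k (i+1) = z k i := heq
            rw [heq']; simp; positivity
          · have heq' : z k (i+1) = proj (z k i - v • g) := heq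
            have hzi : z k i ∈ X := hzmem k (hxmem k) i (Nat.le_of_lt hi)
            rw [heq']
            calc ‖proj (z k i - v•g) - z k i‖ ≤ ‖(z k i - v•g) - z k i‖ :=
                  proj_norm_le hXconv proj hproj _ hzi
              _ = v := by
                  simp only [sub_sub_cancel_left, norm_neg, norm_smul, hg1,
                    Real.norm_eq_abs, abs_of_pos hv, mul_one]
        calc ‖z k (i+1) - x k‖ ≤ ‖z k (i+1) - z k i‖ + ‖z k i - x k‖ :=
              norm_sub_le_norm_sub_add_norm_sub _ _ _
          _ ≤ v + (i:ℝ)*v := add_le_add hstepnorm ihh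
          _ = ((i+1 : ℕ):ℝ)*v := by push_cast; ring
  -- the basic inequality
  have hbasic : ∀ k, ‖x (k+1) - xstar‖^2 ≤ ‖x k - xstar‖^2
      - 2*v*C*((∑ i, f i (x k)) - ∑ i, f i xstar)^q + (m:ℝ)^2 * v^2 := by
    intro k
    set a : ℕ → ℝ := fun j => if h : j < m then f ⟨j,h⟩ (z k j) - f ⟨j,h⟩ xstar else 0
      with hadef
    set b : ℕ → ℝ := fun j => if h : j < m then f ⟨j,h⟩ (x k) - f ⟨j,h⟩ xstar else 0
      with hbdef
    have ha0 : ∀ j ∈ range m, 0 ≤ a j := by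
      intro j hj
      rw [mem_range] at hj
      simp only [hadef, dif_pos hj, sub_nonneg]
      exact hmin ⟨j, hj⟩ _ (hzmem k (hxmem k) j (Nat.le_of_lt hj))
    have hb0 : ∀ j ∈ range m, 0 ≤ b j := by
      intro j hj
      rw [mem_range] at hj
      simp only [hbdef, dif_pos hj, sub_nonneg]
      exact hmin ⟨j, hj⟩ _ (hxmem k)
    have hba : ∀ j ∈ range m, b j ≤ a j + Lmax * ((j:ℝ)*v)^p := by
      intro j hj
      rw [mem_range] at hj
      have hH := hHolder ⟨j, hj⟩ (x k) (hxmem k) (z k j)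
      have hd : ‖z k j - x k‖ ^ p ≤ ((j:ℝ)*v) ^ p :=
        Real.rpow_le_rpow (norm_nonneg _) (hdrift k j (Nat.le_of_lt hj)) hp.le
      simp only [hadef, hbdef, dif_pos hj]
      have habs := neg_abs_le (f ⟨j,hj⟩ (z k j) - f ⟨j,hj⟩ (x k))
      have : Lmax * ‖z k j - x k‖ ^ p ≤ Lmax * (((j:ℝ)*v) ^ p) :=
        mul_le_mul_of_nonneg_left hd hL.le
      linarith
    -- per-step inequality
    have hstep2 : ∀ j (hj : j < m), ‖z k (j+1) - xstar‖^2
        ≤ ‖z k j - xstar‖^2 - 2*v*((a j / Lmax)^q) + v^2 := by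
      intro j hj
      have haj : a j = f ⟨j,hj⟩ (z k j) - f ⟨j,hj⟩ xstar := by
        simp only [hadef, dif_pos hj]
      rcases hstep k ⟨j, hj⟩ with ⟨hfeq, heq⟩ | ⟨hflt, g, hg1, hgsub, heq⟩
      · have heq' : z k (j+1) = z k j := heq
        have haz : a j = 0 := by rw [haj]; simp only [Fin.val_mk] at hfeq ⊢; linarith [hfeq]
        rw [heq', haz, zero_div, Real.zero_rpow (by positivity : q ≠ 0)]
        nlinarith [sq_nonneg v]
      · have heq' : z k (j+1) = proj (z k j - v • g) := heq
        simp only [Fin.val_mk] at hflt hgsub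
        have hpos : 0 < a j := by rw [haj]; linarith
        have hgg : (inner ℝ g g : ℝ) = 1 := by
          rw [real_inner_self_eq_norm_sq, hg1]; norm_num
        set r : ℝ := (a j / Lmax) ^ q with hrdef
        have hr0 : 0 < r := Real.rpow_pos_of_pos (div_pos hpos hL) q
        have hLrp : Lmax * r ^ p = a j := by
          rw [hrdef, ← Real.rpow_mul (div_pos hpos hL).le, mul_comm q p, hpq,
            Real.rpow_one, mul_div_cancel₀ _ hL.ne']
        have key : r ≤ (inner ℝ g (z k j - xstar) : ℝ) := by
          by_contra hcon
          push_neg at hcon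
          set w : ℝ := (inner ℝ g (z k j - xstar) : ℝ) with hwdef
          set t : ℝ := max 0 ((w + r)/2) with htdef
          have ht0 : 0 ≤ t := le_max_left _ _
          have htr : t < r := max_lt hr0 (by linarith)
          have hy : f ⟨j,hj⟩ (xstar + t • g) < f ⟨j,hj⟩ (z k j) := by
            have hH := hHolder ⟨j,hj⟩ xstar hxsX (xstar + t • g)
            have hnorm : ‖xstar + t•g - xstar‖ = t := by
              simp [norm_smul, abs_of_nonneg ht0, hg1]
            rw [hnorm] at hH
            have htp : t ^ p < r ^ p := by
              rcases eq_or_lt_of_le ht0 with h0 | h0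
              · rw [← h0, Real.zero_rpow hp.ne']
                exact Real.rpow_pos_of_pos hr0 p
              · exact Real.rpow_lt_rpow ht0 htr hp
            have h1 : Lmax * t^p < a j := by
              rw [← hLrp]
              exact mul_lt_mul_of_pos_left htp hL
            have h2 := le_abs_self (f ⟨j,hj⟩ (xstar + t•g) - f ⟨j,hj⟩ xstar)
            rw [haj] at h1
            linarith
          have hsub := hgsub (xstar + t•g) hy
          have hexp : (inner ℝ g ((xstar + t•g) - z k j) : ℝ) = t - w := by
            rw [show (xstar + t•g) - z k j = t•g - (z k j - xstar) by abel,
              inner_sub_right, real_inner_smul_right, hgg, hwdef]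
            ring
          rw [hexp] at hsub
          have h2 : (w + r)/2 ≤ t := le_max_right _ _
          linarith
        have h1 : ‖z k (j+1) - xstar‖ ≤ ‖(z k j - v•g) - xstar‖ := by
          rw [heq']
          exact proj_norm_le hXconv proj hproj _ hxsX
        have h3 : ‖z k (j+1) - xstar‖^2 ≤ ‖(z k j - v•g) - xstar‖^2 :=
          pow_le_pow_left₀ (norm_nonneg _) h1 2
        have h2 : ‖(z k j - v•g) - xstar‖^2
            = ‖z k j - xstar‖^2 - 2*(v*(inner ℝ g (z k j - xstar) : ℝ)) + v^2 := by
          rw [show (z k j - v•g) - xstar = (z k j - xstar) - v•g by abel,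
            norm_sub_sq_real, real_inner_smul_right, real_inner_comm, norm_smul, hg1,
            Real.norm_eq_abs, abs_of_pos hv, mul_one]
        have h4 : 2*v*r ≤ 2*v*(inner ℝ g (z k j - xstar) : ℝ) := by
          apply mul_le_mul_of_nonneg_left key (by positivity)
        nlinarith [h3, h2, h4]
    -- telescoping
    have htel : ∀ j, j ≤ m → ‖z k j - xstar‖^2 ≤ ‖x k - xstar‖^2
        - 2*v*(∑ i ∈ range j, (a i / Lmax)^q) + (j:ℝ)*v^2 := by
      intro j hj
      induction j with
      | zero => rw [hz0]; simp
      | succ i ih =>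
          have hi : i < m := hj
          have ihh := ih (Nat.le_of_lt hi)
          have h1 := hstep2 i hi
          rw [Finset.sum_range_succ]
          push_cast
          nlinarith [h1, ihh]
    have H := htel m le_rfl
    rw [← hxsucc k] at H
    -- aggregate via agg_lemma
    have hagg := agg_lemma hm hp hL hv a b ha0 hb0 hba
    rw [← hqdef, ← hCdef] at hagg
    have hsuma : ∑ i ∈ range m, (a i / Lmax)^q = (∑ i ∈ range m, (a i)^q) / Lmax^q := by
      rw [Finset.sum_div]
      refine Finset.sum_congr rfl fun i hi => ?_
      rw [Real.div_rpow (ha0 i hi) hL.le]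
    have hsumb : ∑ i ∈ range m, b i = (∑ i, f i (x k)) - ∑ i, f i xstar := by
      rw [← Fin.sum_univ_eq_sum_range b m, ← Finset.sum_sub_distrib]
      refine Finset.sum_congr rfl fun i _ => ?_
      simp only [hbdef, dif_pos i.isLt, Fin.eta]
    rw [hsumb] at hagg
    rw [hsuma] at H
    have hmul := mul_le_mul_of_nonneg_left hagg (by positivity : (0:ℝ) ≤ 2*v)
    have hring : 2*v*((m:ℝ)*((m:ℝ)-1)/2*v) + (m:ℝ)*v^2 = (m:ℝ)^2*v^2 := by ring
    nlinarith [H, hmul]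
  -- the liminf argument
  set Fs : ℝ := ∑ i, f i xstar with hFsdef
  set u : ℕ → ℝ := fun k => ∑ i, f i (x k) with hudef
  have huFs : ∀ k, Fs ≤ u k := fun k =>
    Finset.sum_le_sum fun i _ => hmin i _ (hxmem k)
  set Z : ℝ := (m:ℝ)^2 * v / (2*C) with hZdef
  have hZ0 : 0 ≤ Z := by positivity
  show Filter.liminf u Filter.atTop ≤ Fs + Z^p
  by_contra hcon
  push_neg at hcon
  have hbdd : Filter.IsBoundedUnder (· ≥ ·) Filter.atTop u :=
    Filter.isBoundedUnder_of ⟨Fs, fun k => huFs k⟩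
  set c : ℝ := ((Fs + Z^p) + Filter.liminf u Filter.atTop)/2 with hcd
  have hc2 : c < Filter.liminf u Filter.atTop := by rw [hcd]; linarith
  have hev := Filter.eventually_lt_of_lt_liminf hc2 hbdd
  obtain ⟨K, hK⟩ := Filter.eventually_atTop.mp hev
  set ε : ℝ := c - (Fs + Z^p) with hεdef
  have hε : 0 < ε := by rw [hεdef, hcd]; linarith
  have hT0 : 0 ≤ Z^p := Real.rpow_nonneg hZ0 p
  set W : ℝ := (Z^p + ε)^q with hW
  have hWZ : Z < W := by
    have h1 : (Z^p)^q < (Z^p + ε)^q := Real.rpow_lt_rpow hT0 (by linarith) hq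
    rwa [← Real.rpow_mul hZ0, hpq, Real.rpow_one] at h1
  have hZm : (m:ℝ)^2*v^2 = 2*v*C*Z := by
    rw [hZdef]
    field_simp
  set δ : ℝ := 2*v*C*W - (m:ℝ)^2*v^2 with hδdef
  have hδ : 0 < δ := by
    rw [hδdef, hZm]
    have := mul_lt_mul_of_pos_left hWZ (by positivity : (0:ℝ) < 2*v*C)
    linarith
  have hdec : ∀ k, K ≤ k → ‖x (k+1) - xstar‖^2 ≤ ‖x k - xstar‖^2 - δ := by
    intro k hk
    have hb := hbasic k
    have huk : Z^p + ε ≤ u k - Fs := by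
      have := hK k hk
      rw [hcd] at this
      rw [hεdef, hcd]
      linarith
    have hq1 : W ≤ (u k - Fs)^q := Real.rpow_le_rpow (by positivity) huk hq.le
    have hq2 : 2*v*C*W ≤ 2*v*C*((u k - Fs)^q) :=
      mul_le_mul_of_nonneg_left hq1 (by positivity)
    rw [hδdef]
    have hbu : ‖x (k+1) - xstar‖^2 ≤ ‖x k - xstar‖^2 - 2*v*C*((u k - Fs)^q)
        + (m:ℝ)^2*v^2 := hb
    linarith
  have hiter : ∀ j : ℕ, ‖x (K+j) - xstar‖^2 ≤ ‖x K - xstar‖^2 - (j:ℝ)*δ := by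
    intro j
    induction j with
    | zero => simp
    | succ i ih =>
        have := hdec (K+i) (Nat.le_add_right K i)
        have heq : K + (i+1) = (K+i) + 1 := by ring
        rw [heq]
        push_cast
        linarith
  obtain ⟨j, hj⟩ := exists_nat_gt (‖x K - xstar‖^2 / δ)
  have hjj : ‖x K - xstar‖^2 < (j:ℝ)*δ := by
    rw [div_lt_iff₀ hδ] at hj
    linarith
  have h1 := hiter j
  have h2 : (0:ℝ) ≤ ‖x (K+j) - xstar‖^2 := by positivity
  linarith
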